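/- Let F ∈ C²(ℝ) with F'(0) = 0. Then for all λ > 0 and all x, y ∈ ℝ³: F(λ|x−y|) = F(λ|x|) − λ ⟨y, w(x)⟩ F'(λ|x|) + λ² |y|² ∫₀¹ (1−θ) [ sin²α · F'(λ|x−θy|)/(λ|x−θy|) + cos²α · F''(λ|x−θy|) ] dθ, where for each θ, cos α = cos α(x,y,θ) is determined by |y| cos α = ⟨y, w(x−θy)⟩ and sin²α := 1 − cos²α, and the quotient F'(p)/p is understood as F''(0) at p = 0. -/

import Mathlib

noncomputable section

open MeasureTheory Real Classical
open scoped RealInnerProductSpace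

/-- `w(x) = x/|x|` for `x ≠ 0`, and `w(0) = 0`. -/
noncomputable def wdir (x : EuclideanSpace ℝ (Fin 3)) : EuclideanSpace ℝ (Fin 3) :=
  if x = 0 then 0 else ‖x‖⁻¹ • x

/-- The quotient `F'(p)/p`, extended continuously by `F''(0)` at `p = 0`
(valid when `F'(0) = 0`). -/
noncomputable def dquot1 (F : ℝ → ℝ) (p : ℝ) : ℝ :=
  if p = 0 then iteratedDeriv 2 F 0 else deriv F p / p

namespace Stmt9Aux

open Filter Asymptotics

local notation "E" => EuclideanSpace ℝ (Fin 3)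

lemma iteratedDeriv_two_eq (F : ℝ → ℝ) : iteratedDeriv 2 F = deriv (deriv F) := by
  rw [show (2 : ℕ) = 1 + 1 from rfl, iteratedDeriv_succ, iteratedDeriv_one]

lemma wdir_inner (y : E) {z : E} (hz : z ≠ 0) : ⟪y, wdir z⟫ = ⟪y, z⟫ / ‖z‖ := by
  rw [wdir, if_neg hz, real_inner_smul_right, div_eq_inv_mul]

lemma wdir_inner_smul (y : E) (hy : y ≠ 0) {s : ℝ} (hs : s ≠ 0) :
    ⟪y, wdir (s • y)⟫ = s * ‖y‖ / |s| := by
  have hz : s • y ≠ 0 := smul_ne_zero hs hy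
  rw [wdir_inner y hz, real_inner_smul_right, real_inner_self_eq_norm_sq, norm_smul,
    Real.norm_eq_abs]
  have h1 : ‖y‖ ≠ 0 := norm_ne_zero_iff.2 hy
  have h2 : |s| ≠ 0 := abs_ne_zero.2 hs
  field_simp

lemma continuous_phi (x y : E) : Continuous (fun t : ℝ => x - t • y) :=
  continuous_const.sub (continuous_id.smul continuous_const)

lemma hasDerivAt_phi (x y : E) (θ : ℝ) : HasDerivAt (fun t : ℝ => x - t • y) (-y) θ := by
  simpa using ((hasDerivAt_id θ).smul_const y).const_sub x

lemma hasDerivAt_normphi {x y : E} {θ : ℝ} (hz : x - θ • y ≠ 0) :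
    HasDerivAt (fun t : ℝ => ‖x - t • y‖) (-(⟪y, x - θ • y⟫ / ‖x - θ • y‖)) θ := by
  have hφ := hasDerivAt_phi x y
  have hq : HasDerivAt (fun t : ℝ => ⟪x - t • y, x - t • y⟫)
      (⟪x - θ • y, -y⟫ + ⟪-y, x - θ • y⟫) θ := (hφ θ).inner ℝ (hφ θ)
  have hqθ : ⟪x - θ • y, x - θ • y⟫ ≠ 0 := by
    rw [real_inner_self_eq_norm_sq]
    exact pow_ne_zero 2 (norm_ne_zero_iff.2 hz)
  have h := (Real.hasDerivAt_sqrt hqθ).comp θ hq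
  simp only [Function.comp_def] at h
  have heq : (fun t : ℝ => Real.sqrt ⟪x - t • y, x - t • y⟫) = fun t : ℝ => ‖x - t • y‖ := by
    funext t
    rw [real_inner_self_eq_norm_sq, Real.sqrt_sq (norm_nonneg _)]
  rw [heq] at h
  refine h.congr_deriv ?_
  rw [real_inner_self_eq_norm_sq, Real.sqrt_sq (norm_nonneg _), inner_neg_left, inner_neg_right,
    real_inner_comm]
  have h1 : ‖x - θ • y‖ ≠ 0 := norm_ne_zero_iff.2 hz
  field_simp
  ring

variable {F : ℝ → ℝ} {lam : ℝ} {x y : E}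

lemma hasDerivAt_g (hF : ContDiff ℝ 2 F) (hF0 : deriv F 0 = 0) (θ : ℝ) :
    HasDerivAt (fun t : ℝ => F (lam * ‖x - t • y‖))
      (-(lam * ⟪y, wdir (x - θ • y)⟫ * deriv F (lam * ‖x - θ • y‖))) θ := by
  have hdF : Differentiable ℝ F := hF.differentiable (by norm_num)
  by_cases hz : x - θ • y = 0
  · -- collinear point: x = θ • y
    have hx : x = θ • y := by rwa [sub_eq_zero] at hz
    have hphi : ∀ t : ℝ, x - t • y = (θ - t) • y := by
      intro t; rw [hx, sub_smul]
    have haθ : ⟪y, wdir (x - θ • y)⟫ = 0 := by rw [hz]; simp [wdir]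
    rw [haθ, show (-(lam * (0:ℝ) * deriv F (lam * ‖x - θ • y‖))) = 0 by ring]
    have hG : HasDerivAt (fun s : ℝ => F (lam * ‖y‖ * s)) 0 0 := by
      have h1 : HasDerivAt (fun s : ℝ => lam * ‖y‖ * s) (lam * ‖y‖) 0 := by
        simpa using (hasDerivAt_id (0:ℝ)).const_mul (lam * ‖y‖)
      have h2 := (hdF (lam * ‖y‖ * 0)).hasDerivAt.comp (0:ℝ) h1
      simpa [Function.comp_def, hF0] using h2
    have hlt : (fun s : ℝ => F (lam * ‖y‖ * s) - F (lam * ‖y‖ * 0)) =o[nhds 0]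
        (fun s : ℝ => s) := by
      have := hasDerivAt_iff_isLittleO.1 hG
      simpa using this
    have htend : Tendsto (fun t : ℝ => |t - θ|) (nhds θ) (nhds 0) := by
      have : Tendsto (fun t : ℝ => t - θ) (nhds θ) (nhds (θ - θ)) :=
        (continuous_id.sub continuous_const).tendsto θ
      simpa using this.abs
    have h2 := hlt.comp_tendsto htend
    have h3 : (fun t : ℝ => |t - θ|) =O[nhds θ] (fun t : ℝ => t - θ) := by
      apply isBigO_of_le
      intro t; simp [abs_abs]
    have h4 := h2.trans_isBigO h3
    rw [hasDerivAt_iff_isLittleO]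
    simp only [smul_eq_mul]
    have h5 : (fun t : ℝ => F (lam * ‖x - t • y‖) - F (lam * ‖x - θ • y‖) - (t - θ) * 0)
        = fun t : ℝ => F (lam * ‖y‖ * |t - θ|) - F (lam * ‖y‖ * 0) := by
      funext t
      have e1 : lam * ‖x - t • y‖ = lam * ‖y‖ * |t - θ| := by
        rw [hphi t, norm_smul, Real.norm_eq_abs, abs_sub_comm θ t]; ring
      have e2 : lam * ‖x - θ • y‖ = lam * ‖y‖ * 0 := by rw [hz]; simp
      rw [e1, e2]; ring
    rw [h5]
    simpa [Function.comp_def] using h4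
  · -- generic point
    have hn := hasDerivAt_normphi hz
    have h := ((hdF _).hasDerivAt).comp θ (hn.const_mul lam)
    simp only [Function.comp_def] at h
    refine h.congr_deriv ?_
    rw [wdir_inner y hz]
    ring

lemma eventually_ne {θ : ℝ} (hz : x - θ • y ≠ 0) :
    ∀ᶠ t in nhds θ, x - t • y ≠ 0 := by
  have : ∀ᶠ z in nhds (x - θ • y), z ≠ 0 := isOpen_ne.eventually_mem hz
  exact ((continuous_phi x y).continuousAt (x := θ)).eventually this

lemma hasDerivAt_g1 (hF : ContDiff ℝ 2 F) (hF0 : deriv F 0 = 0) (hlam : 0 < lam)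
    (hy : y ≠ 0) (θ : ℝ) :
    HasDerivAt (fun t : ℝ => -(lam * ⟪y, wdir (x - t • y)⟫ * deriv F (lam * ‖x - t • y‖)))
      (lam ^ 2 * ‖y‖ ^ 2 *
        ((1 - (⟪y, wdir (x - θ • y)⟫ / ‖y‖) ^ 2) * dquot1 F (lam * ‖x - θ • y‖)
          + (⟪y, wdir (x - θ • y)⟫ / ‖y‖) ^ 2 * iteratedDeriv 2 F (lam * ‖x - θ • y‖))) θ := by
  have hdF : Differentiable ℝ F := hF.differentiable (by norm_num)
  have hD2 : Differentiable ℝ (deriv F) := by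
    have := (contDiff_succ_iff_deriv (n := 1)).1 (by exact_mod_cast hF)
    exact this.2.2.differentiable (by norm_num)
  have hyn : ‖y‖ ≠ 0 := norm_ne_zero_iff.2 hy
  by_cases hz : x - θ • y = 0
  · -- collinear case
    have hx : x = θ • y := by rwa [sub_eq_zero] at hz
    have hphi : ∀ t : ℝ, x - t • y = (θ - t) • y := by
      intro t; rw [hx, sub_smul]
    set c : ℝ := lam * ‖y‖ with hc
    have hcpos : 0 < c := mul_pos hlam (norm_pos_iff.2 hy)
    set b : ℝ := iteratedDeriv 2 F 0 with hb
    have haθ : ⟪y, wdir (x - θ • y)⟫ = 0 := by rw [hz]; simp [wdir]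
    have htarget : lam ^ 2 * ‖y‖ ^ 2 *
        ((1 - (⟪y, wdir (x - θ • y)⟫ / ‖y‖) ^ 2) * dquot1 F (lam * ‖x - θ • y‖)
          + (⟪y, wdir (x - θ • y)⟫ / ‖y‖) ^ 2 * iteratedDeriv 2 F (lam * ‖x - θ • y‖))
        = c ^ 2 * b := by
      rw [haθ, hz, norm_zero, mul_zero]
      rw [show dquot1 F 0 = iteratedDeriv 2 F 0 from if_pos rfl]
      rw [hc, hb]
      ring
    rw [htarget, hasDerivAt_iff_isLittleO]
    simp only [smul_eq_mul]
    have hg1θ : -(lam * ⟪y, wdir (x - θ • y)⟫ * deriv F (lam * ‖x - θ • y‖)) = 0 := by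
      rw [haθ]; ring
    have hDb : HasDerivAt (deriv F) b 0 := by
      rw [hb, iteratedDeriv_two_eq]
      exact (hD2 0).hasDerivAt
    have hlit : (fun p : ℝ => deriv F p - p * b) =o[nhds 0] (fun p : ℝ => p) := by
      have := hasDerivAt_iff_isLittleO.1 hDb
      simpa [hF0, mul_comm] using this
    have htend : Tendsto (fun t : ℝ => c * |t - θ|) (nhds θ) (nhds 0) := by
      have h1 : Tendsto (fun t : ℝ => t - θ) (nhds θ) (nhds (θ - θ)) :=
        (continuous_id.sub continuous_const).tendsto θ
      have h2 := (h1.abs.const_mul c)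
      simpa using h2
    have h2 := hlit.comp_tendsto htend
    have h3 : (fun t : ℝ => c * |t - θ|) =O[nhds θ] (fun t : ℝ => t - θ) := by
      have h3' : (fun t : ℝ => |t - θ|) =O[nhds θ] (fun t : ℝ => t - θ) := by
        apply isBigO_of_le
        intro t; simp [abs_abs]
      exact h3'.const_mul_left c
    have h4 : (fun t : ℝ => deriv F (c * |t - θ|) - c * |t - θ| * b) =o[nhds θ]
        (fun t : ℝ => t - θ) := by
      have := h2.trans_isBigO h3
      simpa [Function.comp_def] using this
    have h5 := h4.const_mul_left (lam * ‖y‖)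
    refine (IsBigO.trans_isLittleO ?_ h5)
    apply isBigO_of_le
    intro t
    simp only [Real.norm_eq_abs]
    rw [hg1θ]
    by_cases ht : t = θ
    · subst ht
      rw [hz]
      simp [wdir, hF0, hc]
    · have hs : θ - t ≠ 0 := sub_ne_zero.2 (fun h => ht h.symm)
      have habs : |θ - t| ≠ 0 := abs_ne_zero.2 hs
      have ha : ⟪y, wdir (x - t • y)⟫ = (θ - t) * ‖y‖ / |θ - t| := by
        rw [hphi t, wdir_inner_smul y hy hs]
      have hnorm : lam * ‖x - t • y‖ = c * |t - θ| := by
        rw [hphi t, norm_smul, Real.norm_eq_abs, abs_sub_comm θ t, hc]; ring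
      rw [ha, hnorm]
      have key : -(lam * ((θ - t) * ‖y‖ / |θ - t|) * deriv F (c * |t - θ|)) - 0
            - (t - θ) * (c ^ 2 * b)
          = -(lam * ‖y‖ * ((θ - t) / |θ - t|)) * (deriv F (c * |t - θ|) - c * |t - θ| * b) := by
        rw [abs_sub_comm t θ, hc]
        field_simp
        ring
      rw [key]
      have h8 : abs ((θ - t) / |θ - t|) = 1 := by
        rw [abs_div, abs_abs, div_self habs]
      rw [abs_mul, abs_neg, abs_mul, h8, mul_one, ← abs_mul]
  · -- generic case
    have hev := eventually_ne (x := x) (y := y) hz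
    have hrθ : ‖x - θ • y‖ ≠ 0 := norm_ne_zero_iff.2 hz
    have heq : (fun t : ℝ => -(lam * (⟪y, x - t • y⟫ / ‖x - t • y‖) * deriv F (lam * ‖x - t • y‖)))
        =ᶠ[nhds θ] fun t : ℝ => -(lam * ⟪y, wdir (x - t • y)⟫ * deriv F (lam * ‖x - t • y‖)) := by
      filter_upwards [hev] with t ht
      rw [wdir_inner y ht]
    have hφ := hasDerivAt_phi x y θ
    have hn : HasDerivAt (fun t : ℝ => ⟪y, x - t • y⟫) (-(‖y‖ ^ 2)) θ := by
      have h0 := (hasDerivAt_const θ y).inner ℝ hφ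
      have he : ⟪y, -y⟫ + ⟪(0 : E), x - θ • y⟫ = -(‖y‖ ^ 2) := by
        rw [inner_neg_right, inner_zero_left, real_inner_self_eq_norm_sq]; ring
      rw [he] at h0
      exact h0
    have hr := hasDerivAt_normphi hz
    set r : ℝ := ‖x - θ • y‖ with hrdef
    set nv : ℝ := ⟪y, x - θ • y⟫ with hnv
    have hu : HasDerivAt (fun t : ℝ => ⟪y, x - t • y⟫ / ‖x - t • y‖)
        ((-(‖y‖ ^ 2) * r - nv * (-(nv / r))) / r ^ 2) θ := hn.div hr hrθ
    have hDcomp : HasDerivAt (fun t : ℝ => deriv F (lam * ‖x - t • y‖))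
        (deriv (deriv F) (lam * r) * (lam * -(nv / r))) θ := by
      have := (hD2 (lam * r)).hasDerivAt.comp θ (hr.const_mul lam)
      simpa [Function.comp_def] using this
    have hprod := ((hu.const_mul lam).mul hDcomp).neg
    have h := hprod.congr_of_eventuallyEq heq.symm
    refine h.congr_deriv ?_
    rw [wdir_inner y hz, ← hrdef, ← hnv]
    have hlr : lam * r ≠ 0 := mul_ne_zero (ne_of_gt hlam) hrθ
    rw [dquot1, if_neg hlr, iteratedDeriv_two_eq]
    field_simp
    ring

lemma continuous_g2 (hF : ContDiff ℝ 2 F) (hF0 : deriv F 0 = 0) (hlam : 0 < lam)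
    (hy : y ≠ 0) :
    Continuous (fun t : ℝ =>
      (1 - (⟪y, wdir (x - t • y)⟫ / ‖y‖) ^ 2) * dquot1 F (lam * ‖x - t • y‖)
        + (⟪y, wdir (x - t • y)⟫ / ‖y‖) ^ 2 * iteratedDeriv 2 F (lam * ‖x - t • y‖)) := by
  have hD2 : Differentiable ℝ (deriv F) := by
    have := (contDiff_succ_iff_deriv (n := 1)).1 (by exact_mod_cast hF)
    exact this.2.2.differentiable (by norm_num)
  have hD2c : Continuous (deriv (deriv F)) := by
    have := (contDiff_succ_iff_deriv (n := 1)).1 (by exact_mod_cast hF)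
    exact (contDiff_one_iff_deriv.1 this.2.2).2
  have hDc : Continuous (deriv F) := hD2.continuous
  have hyn : ‖y‖ ≠ 0 := norm_ne_zero_iff.2 hy
  have hφc : Continuous (fun t : ℝ => x - t • y) := continuous_phi x y
  by_cases hcol : ∃ θ₀ : ℝ, x = θ₀ • y
  · obtain ⟨θ₀, hx⟩ := hcol
    have hphi : ∀ t : ℝ, x - t • y = (θ₀ - t) • y := by
      intro t; rw [hx, sub_smul]
    have hfun : (fun t : ℝ =>
        (1 - (⟪y, wdir (x - t • y)⟫ / ‖y‖) ^ 2) * dquot1 F (lam * ‖x - t • y‖)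
          + (⟪y, wdir (x - t • y)⟫ / ‖y‖) ^ 2 * iteratedDeriv 2 F (lam * ‖x - t • y‖))
        = fun t : ℝ => iteratedDeriv 2 F (lam * ‖y‖ * |θ₀ - t|) := by
      funext t
      by_cases ht : t = θ₀
      · subst ht
        rw [hphi t, sub_self, zero_smul]
        simp [wdir, dquot1]
      · have hs : θ₀ - t ≠ 0 := sub_ne_zero.2 (fun h => ht h.symm)
        have habs : |θ₀ - t| ≠ 0 := abs_ne_zero.2 hs
        have ha : ⟪y, wdir (x - t • y)⟫ = (θ₀ - t) * ‖y‖ / |θ₀ - t| := by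
          rw [hphi t, wdir_inner_smul y hy hs]
        have ha2 : ⟪y, wdir (x - t • y)⟫ / ‖y‖ = (θ₀ - t) / |θ₀ - t| := by
          rw [ha]; field_simp
        have hsq : ((θ₀ - t) / |θ₀ - t|) ^ 2 = 1 := by
          rw [div_pow, sq_abs, div_self (pow_ne_zero 2 hs)]
        have hnorm : lam * ‖x - t • y‖ = lam * ‖y‖ * |θ₀ - t| := by
          rw [hphi t, norm_smul, Real.norm_eq_abs]; ring
        rw [ha2, hsq, hnorm]
        ring
    rw [hfun]
    exact (iteratedDeriv_two_eq F ▸ hD2c).comp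
      (continuous_const.mul ((continuous_const.sub continuous_id).abs))
  · have hne : ∀ t : ℝ, x - t • y ≠ 0 := by
      intro t h
      exact hcol ⟨t, by rwa [sub_eq_zero] at h⟩
    have hrne : ∀ t : ℝ, lam * ‖x - t • y‖ ≠ 0 :=
      fun t => mul_ne_zero (ne_of_gt hlam) (norm_ne_zero_iff.2 (hne t))
    have hac : Continuous (fun t : ℝ => ⟪y, wdir (x - t • y)⟫ / ‖y‖) := by
      have heq2 : (fun t : ℝ => ⟪y, wdir (x - t • y)⟫ / ‖y‖)
          = fun t : ℝ => (⟪y, x - t • y⟫ / ‖x - t • y‖) / ‖y‖ := by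
        funext t; rw [wdir_inner y (hne t)]
      rw [heq2]
      exact ((continuous_const.inner hφc).div hφc.norm
        (fun t => norm_ne_zero_iff.2 (hne t))).div_const _
    have hdq : Continuous (fun t : ℝ => dquot1 F (lam * ‖x - t • y‖)) := by
      have heq3 : (fun t : ℝ => dquot1 F (lam * ‖x - t • y‖))
          = fun t : ℝ => deriv F (lam * ‖x - t • y‖) / (lam * ‖x - t • y‖) := by
        funext t; rw [dquot1, if_neg (hrne t)]
      rw [heq3]
      exact (hDc.comp (continuous_const.mul hφc.norm)).div
        (continuous_const.mul hφc.norm) hrne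
    have hit : Continuous (fun t : ℝ => iteratedDeriv 2 F (lam * ‖x - t • y‖)) :=
      (iteratedDeriv_two_eq F ▸ hD2c).comp (continuous_const.mul hφc.norm)
    exact ((continuous_const.sub (hac.pow 2)).mul hdq).add ((hac.pow 2).mul hit)

end Stmt9Aux

open Stmt9Aux Filter Asymptotics

/-- Taylor-type expansion, Lemma 3.5(ii): for `F ∈ C²(ℝ)` with `F'(0) = 0`,
`λ > 0` and `x, y ∈ ℝ³`,
`F(λ|x-y|) = F(λ|x|) - λ⟨y,w(x)⟩F'(λ|x|) + λ²|y|² ∫₀¹ (1-θ)[sin²α · F'(λ|x-θy|)/(λ|x-θy|)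
 + cos²α · F''(λ|x-θy|)] dθ`, where `|y| cos α = ⟨y, w(x-θy)⟩` and `sin²α = 1 - cos²α`. -/
theorem stmt9 (F : ℝ → ℝ) (hF : ContDiff ℝ 2 F) (hF0 : deriv F 0 = 0)
    (lam : ℝ) (hlam : 0 < lam) (x y : EuclideanSpace ℝ (Fin 3)) :
    F (lam * ‖x - y‖) = F (lam * ‖x‖) - lam * ⟪y, wdir x⟫ * deriv F (lam * ‖x‖)
      + lam ^ 2 * ‖y‖ ^ 2 *
        ∫ θ in (0 : ℝ)..1, (1 - θ) *
          ((1 - (⟪y, wdir (x - θ • y)⟫ / ‖y‖) ^ 2) * dquot1 F (lam * ‖x - θ • y‖)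
            + (⟪y, wdir (x - θ • y)⟫ / ‖y‖) ^ 2 * iteratedDeriv 2 F (lam * ‖x - θ • y‖)) := by
  by_cases hy : y = 0
  · subst hy
    simp
  set g : ℝ → ℝ := fun t => F (lam * ‖x - t • y‖) with hg
  set g1 : ℝ → ℝ := fun t => -(lam * ⟪y, wdir (x - t • y)⟫ * deriv F (lam * ‖x - t • y‖)) with hg1
  set G2 : ℝ → ℝ := fun t =>
      (1 - (⟪y, wdir (x - t • y)⟫ / ‖y‖) ^ 2) * dquot1 F (lam * ‖x - t • y‖)
        + (⟪y, wdir (x - t • y)⟫ / ‖y‖) ^ 2 * iteratedDeriv 2 F (lam * ‖x - t • y‖) with hG2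
  have hdg : ∀ θ : ℝ, HasDerivAt g (g1 θ) θ := fun θ => hasDerivAt_g hF hF0 θ
  have hdg1 : ∀ θ : ℝ, HasDerivAt g1 (lam ^ 2 * ‖y‖ ^ 2 * G2 θ) θ :=
    fun θ => hasDerivAt_g1 hF hF0 hlam hy θ
  have hG2c : Continuous G2 := continuous_g2 hF hF0 hlam hy
  set h : ℝ → ℝ := fun t => g t + (1 - t) * g1 t with hh
  have hdh : ∀ θ : ℝ, HasDerivAt h ((1 - θ) * (lam ^ 2 * ‖y‖ ^ 2 * G2 θ)) θ := by
    intro θ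
    have h1 := ((hasDerivAt_const θ (1 : ℝ)).sub (hasDerivAt_id θ)).mul (hdg1 θ)
    have h2 := (hdg θ).add h1
    refine h2.congr_deriv ?_
    simp only [Pi.sub_apply, id_eq]
    ring
  have hint : IntervalIntegrable (fun θ : ℝ => (1 - θ) * (lam ^ 2 * ‖y‖ ^ 2 * G2 θ))
      MeasureTheory.volume 0 1 :=
    (((continuous_const.sub continuous_id).mul (continuous_const.mul hG2c))).intervalIntegrable 0 1
  have key := intervalIntegral.integral_eq_sub_of_hasDerivAt (fun θ _ => hdh θ) hint
  have h0 : h 0 = g 0 + g1 0 := by simp [hh]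
  have h1 : h 1 = g 1 := by simp [hh]
  have hpull : ∫ θ in (0:ℝ)..1, (1 - θ) * (lam ^ 2 * ‖y‖ ^ 2 * G2 θ)
      = lam ^ 2 * ‖y‖ ^ 2 * ∫ θ in (0:ℝ)..1, (1 - θ) * G2 θ := by
    rw [← intervalIntegral.integral_const_mul]
    congr 1
    funext θ
    ring
  rw [hpull, h0, h1] at key
  have hg1val : g 1 = g 0 + g1 0 + lam ^ 2 * ‖y‖ ^ 2 * ∫ θ in (0:ℝ)..1, (1 - θ) * G2 θ := by
    linarith
  have e1 : g 1 = F (lam * ‖x - y‖) := by simp [hg]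
  have e0 : g 0 = F (lam * ‖x‖) := by simp [hg]
  have e2 : g1 0 = -(lam * ⟪y, wdir x⟫ * deriv F (lam * ‖x‖)) := by simp [hg1]
  rw [e1, e0, e2] at hg1val
  rw [hg1val]
  ring
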